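/- Let L¹ and L² be mutually weak orthogonal Latin squares of order d₁d₂ on Z_{d₁d₂}, and define orthonormal bases B^s = {|φ^s_{n,m,l}⟩} of C^{d₁} ⊗ C^{d₂} ⊗ C^{d₁d₂} by |φ^s_{n,m,l}⟩ = (1/√(d₁d₂)) Σ_{i,j} ω_{d₁}^{ni} ω_{d₂}^{mj} |i⟩ ⊗ |j⟩ ⊗ |L^s(l, f(i,j))⟩ for s = 1, 2. Then B¹ and B² are mutually unbiased: |⟨φ¹_{n',m',l'} | φ²_{n,m,l}⟩| = 1/(d₁d₂) for all indices. -/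

import Mathlib

open Complex

/-- Component of `|φ^s_{n,m,l}⟩` at `|i⟩⊗|j⟩⊗|r⟩`, with `f(i,j) = d₂·i + j`. -/
noncomputable def phiC2 (d₁ d₂ : ℕ)
    (L : ZMod (d₁ * d₂) → ZMod (d₁ * d₂) → ZMod (d₁ * d₂))
    (n : ZMod d₁) (m : ZMod d₂) (l : ZMod (d₁ * d₂))
    (i : ZMod d₁) (j : ZMod d₂) (r : ZMod (d₁ * d₂)) : ℂ :=
  ((Real.sqrt (d₁ * d₂) : ℂ))⁻¹ *
    Complex.exp (2 * Real.pi * Complex.I / d₁) ^ (n.val * i.val) *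
    Complex.exp (2 * Real.pi * Complex.I / d₂) ^ (m.val * j.val) *
    (if L l (((d₂ * i.val + j.val : ℕ)) : ZMod (d₁ * d₂)) = r then 1 else 0)

/-- If `L¹, L²` are mutually weak orthogonal Latin squares of order
`d₁d₂`, the two associated orthonormal bases of `C^{d₁} ⊗ C^{d₂} ⊗ C^{d₁d₂}` are
mutually unbiased: all pairwise inner products have modulus `1/(d₁d₂)`. -/
theorem mub_of_mwols (d₁ d₂ : ℕ) [NeZero d₁] [NeZero d₂] [NeZero (d₁ * d₂)]
    (L₁ L₂ : ZMod (d₁ * d₂) → ZMod (d₁ * d₂) → ZMod (d₁ * d₂))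
    (h₁r : ∀ l, Function.Bijective (L₁ l)) (h₁c : ∀ c, Function.Bijective fun l => L₁ l c)
    (h₂r : ∀ l, Function.Bijective (L₂ l)) (h₂c : ∀ c, Function.Bijective fun l => L₂ l c)
    (hweak : ∀ l' l : ZMod (d₁ * d₂), ∃! c : ZMod (d₁ * d₂), L₁ l' c = L₂ l c)
    (n' n : ZMod d₁) (m' m : ZMod d₂) (l' l : ZMod (d₁ * d₂)) :
    ‖∑ i : ZMod d₁, ∑ j : ZMod d₂, ∑ r : ZMod (d₁ * d₂),
      (starRingEnd ℂ) (phiC2 d₁ d₂ L₁ n' m' l' i j r) * phiC2 d₁ d₂ L₂ n m l i j r‖ =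
      ((d₁ : ℝ) * d₂)⁻¹ := by
  classical
  have hd₁ : 0 < d₁ := Nat.pos_of_ne_zero (NeZero.ne d₁)
  have hd₂ : 0 < d₂ := Nat.pos_of_ne_zero (NeZero.ne d₂)
  set g : ZMod d₁ × ZMod d₂ → ZMod (d₁ * d₂) :=
    fun p => ((d₂ * p.1.val + p.2.val : ℕ) : ZMod (d₁ * d₂)) with hg
  have hbound : ∀ p : ZMod d₁ × ZMod d₂, d₂ * p.1.val + p.2.val < d₁ * d₂ := by
    rintro ⟨i, j⟩
    have h1 : i.val < d₁ := ZMod.val_lt i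
    have h2 : j.val < d₂ := ZMod.val_lt j
    calc d₂ * i.val + j.val < d₂ * i.val + d₂ := by omega
      _ = d₂ * (i.val + 1) := by ring
      _ ≤ d₂ * d₁ := Nat.mul_le_mul_left _ h1
      _ = d₁ * d₂ := Nat.mul_comm _ _
  have hg_inj : Function.Injective g := by
    rintro ⟨i, j⟩ ⟨i', j'⟩ h
    have hv := congrArg ZMod.val h
    rw [hg] at hv
    simp only at hv
    rw [ZMod.val_cast_of_lt (hbound (i, j)), ZMod.val_cast_of_lt (hbound (i', j'))] at hv
    have h2 : j.val < d₂ := ZMod.val_lt j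
    have h2' : j'.val < d₂ := ZMod.val_lt j'
    have hjv : j.val = j'.val := by
      have := congrArg (· % d₂) hv
      simpa [Nat.mul_add_mod, Nat.mod_eq_of_lt h2, Nat.mod_eq_of_lt h2'] using this
    have hiv : i.val = i'.val := by
      have := congrArg (· / d₂) hv
      simpa [Nat.mul_add_div hd₂, Nat.div_eq_of_lt h2, Nat.div_eq_of_lt h2'] using this
    exact Prod.ext (ZMod.val_injective _ hiv) (ZMod.val_injective _ hjv)
  have hg_bij : Function.Bijective g := by
    rw [Fintype.bijective_iff_injective_and_card]
    exact ⟨hg_inj, by simp [ZMod.card]⟩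
  obtain ⟨c₀, hc₀, hc₀uniq⟩ := hweak l' l
  obtain ⟨⟨i₀, j₀⟩, hij⟩ := hg_bij.2 c₀
  -- abbreviations
  set A : ZMod d₁ → ZMod d₂ → ℂ := fun i j =>
    ((Real.sqrt (d₁ * d₂) : ℂ))⁻¹ *
      Complex.exp (2 * Real.pi * Complex.I / d₁) ^ (n'.val * i.val) *
      Complex.exp (2 * Real.pi * Complex.I / d₂) ^ (m'.val * j.val) with hA
  set B : ZMod d₁ → ZMod d₂ → ℂ := fun i j =>
    ((Real.sqrt (d₁ * d₂) : ℂ))⁻¹ *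
      Complex.exp (2 * Real.pi * Complex.I / d₁) ^ (n.val * i.val) *
      Complex.exp (2 * Real.pi * Complex.I / d₂) ^ (m.val * j.val) with hB
  have key : ∀ (x y : ℂ) (P Q : ZMod (d₁ * d₂)),
      (∑ r : ZMod (d₁ * d₂), (starRingEnd ℂ) (x * (if P = r then 1 else 0)) *
        (y * (if Q = r then 1 else 0)))
      = (starRingEnd ℂ) x * y * (if P = Q then 1 else 0) := by
    intro x y P Q
    rw [Finset.sum_eq_single P]
    · rcases eq_or_ne P Q with h | h
      · simp [h]
      · simp [h, Ne.symm h]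
    · intro b _ hb
      simp [Ne.symm hb]
    · simp
  have hsum : ∀ (i : ZMod d₁) (j : ZMod d₂),
      (∑ r : ZMod (d₁ * d₂), (starRingEnd ℂ) (phiC2 d₁ d₂ L₁ n' m' l' i j r) *
        phiC2 d₁ d₂ L₂ n m l i j r)
      = (starRingEnd ℂ) (A i j) * B i j *
        (if L₁ l' (g (i, j)) = L₂ l (g (i, j)) then 1 else 0) := by
    intro i j
    simpa only [phiC2, hA, hB, hg] using
      key (A i j) (B i j) (L₁ l' (g (i, j))) (L₂ l (g (i, j)))
  simp only [hsum]
  rw [← Fintype.sum_prod_type' (f := fun (i : ZMod d₁) (j : ZMod d₂) =>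
      (starRingEnd ℂ) (A i j) * B i j *
        (if L₁ l' (g (i, j)) = L₂ l (g (i, j)) then 1 else 0))]
  rw [Finset.sum_eq_single (i₀, j₀)]
  · rw [show g (i₀, j₀) = c₀ from hij, if_pos hc₀, mul_one]
    have hexp : ∀ (d : ℕ) (k : ℕ),
        ‖Complex.exp (2 * Real.pi * Complex.I / d) ^ k‖ = 1 := by
      intro d k
      have : (2 * (Real.pi : ℂ) * Complex.I / d) = ((2 * Real.pi / d : ℝ) : ℂ) * Complex.I := by
        push_cast; ring
      rw [this, norm_pow, Complex.norm_exp_ofReal_mul_I, one_pow]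
    have hs : (0 : ℝ) ≤ (d₁ : ℝ) * d₂ := by positivity
    rw [norm_mul, Complex.norm_conj, hA, hB]
    simp only [norm_mul, norm_inv, Complex.norm_real, Real.norm_eq_abs, hexp, mul_one]
    rw [← mul_inv, abs_mul_abs_self, Real.mul_self_sqrt hs]
  · rintro ⟨i, j⟩ _ hne
    rw [if_neg, mul_zero]
    intro hcontra
    exact hne (hg_inj (hij ▸ hc₀uniq _ hcontra : g (i, j) = g (i₀, j₀)))
  · simp
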